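/- Let (Ω, μ) be a finite measure space, let m ∈ ℕ, and let D^loc ⊆ ℝ^m be nonempty. Define D := { y ∈ L²(μ; ℝ^m) : y(x) ∈ D^loc for μ-a.e. x ∈ Ω }. Let D_k^loc ⊆ ℝ^m be nonempty and let ρ > 0 satisfy sup_{η∈D_k^loc} inf_{ξ∈D^loc} |η − ξ| ≤ ρ. Then every simple (finitely-valued measurable) function y_k ∈ L²(μ; ℝ^m) with y_k(x) ∈ D_k^loc for μ-a.e. x ∈ Ω satisfies inf_{y∈D} ‖y_k − y‖_{L²(μ;ℝ^m)} ≤ √(μ(Ω)) · ρ. -/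

import Mathlib

open Filter Topology MeasureTheory ENNReal

/-- uniform approximation of the material data set: if
`sup_{η ∈ D_k^loc} inf_{ξ ∈ D^loc} |η - ξ| ≤ ρ`, then every simple function in
`L²(μ; ℝ^m)` with values a.e. in `D_k^loc` has distance at most `√(μ(Ω)) · ρ` to the set
`D = {y ∈ L² : y(x) ∈ D^loc a.e.}`. -/
theorem statement7 {Ω : Type*} [MeasurableSpace Ω] (μ : Measure Ω) [IsFiniteMeasure μ]
    (m : ℕ) (Dloc : Set (EuclideanSpace ℝ (Fin m))) (hDloc : Dloc.Nonempty)
    (Dkloc : Set (EuclideanSpace ℝ (Fin m))) (hDk : Dkloc.Nonempty)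
    (ρ : ℝ) (hρ : 0 < ρ)
    (hH : ∀ η ∈ Dkloc, Metric.infDist η Dloc ≤ ρ)
    (yk : SimpleFunc Ω (EuclideanSpace ℝ (Fin m)))
    (hmem : MemLp (yk : Ω → EuclideanSpace ℝ (Fin m)) 2 μ)
    (hval : ∀ᵐ x ∂μ, yk x ∈ Dkloc) :
    Metric.infDist (hmem.toLp yk)
      {y : Lp (EuclideanSpace ℝ (Fin m)) 2 μ | ∀ᵐ x ∂μ, y x ∈ Dloc}
      ≤ Real.sqrt (μ Set.univ).toReal * ρ := by
  classical
  obtain ⟨ξ₀, hξ₀⟩ := hDloc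
  set c : ℝ := Real.sqrt (μ Set.univ).toReal with hc
  have hc0 : 0 ≤ c := Real.sqrt_nonneg _
  have key : ∀ ε : ℝ, 0 < ε →
      Metric.infDist (hmem.toLp yk)
        {y : Lp (EuclideanSpace ℝ (Fin m)) 2 μ | ∀ᵐ x ∂μ, y x ∈ Dloc}
        ≤ c * (ρ + ε) := by
    intro ε hε
    have hex : ∀ η ∈ Dkloc, ∃ ξ ∈ Dloc, dist η ξ < ρ + ε := by
      intro η hη
      exact (Metric.infDist_lt_iff ⟨ξ₀, hξ₀⟩).mp
        (lt_of_le_of_lt (hH η hη) (by linarith))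
    set g : EuclideanSpace ℝ (Fin m) → EuclideanSpace ℝ (Fin m) := fun η =>
      if h : ∃ ξ ∈ Dloc, dist η ξ < ρ + ε then h.choose else ξ₀ with hg
    have hgDloc : ∀ η, g η ∈ Dloc := by
      intro η
      by_cases h : ∃ ξ ∈ Dloc, dist η ξ < ρ + ε
      · simp only [hg, dif_pos h]; exact h.choose_spec.1
      · simp only [hg, dif_neg h]; exact hξ₀
    have hgdist : ∀ η ∈ Dkloc, dist η (g η) ≤ ρ + ε := by
      intro η hη
      have h := hex η hη
      simp only [hg, dif_pos h]
      exact (h.choose_spec.2).le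
    set z : SimpleFunc Ω (EuclideanSpace ℝ (Fin m)) := yk.map g with hz
    have hzmem : MemLp (z : Ω → EuclideanSpace ℝ (Fin m)) 2 μ :=
      z.memLp_of_isFiniteMeasure 2 μ
    have hzD : hzmem.toLp z ∈
        {y : Lp (EuclideanSpace ℝ (Fin m)) 2 μ | ∀ᵐ x ∂μ, y x ∈ Dloc} := by
      filter_upwards [hzmem.coeFn_toLp] with x hx
      rw [hx]
      exact hgDloc _
    have hbound : ∀ᵐ x ∂μ, ‖(yk : Ω → EuclideanSpace ℝ (Fin m)) x
        - (z : Ω → EuclideanSpace ℝ (Fin m)) x‖ ≤ ρ + ε := by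
      filter_upwards [hval] with x hx
      rw [← dist_eq_norm]
      exact hgdist _ hx
    have hsnorm : eLpNorm ((yk : Ω → EuclideanSpace ℝ (Fin m))
        - (z : Ω → EuclideanSpace ℝ (Fin m))) 2 μ
        ≤ μ Set.univ ^ (2 : ℝ≥0∞).toReal⁻¹ * ENNReal.ofReal (ρ + ε) :=
      eLpNorm_le_of_ae_bound hbound
    have hdist : dist (hmem.toLp yk) (hzmem.toLp z) ≤ c * (ρ + ε) := by
      rw [dist_eq_norm, ← MemLp.toLp_sub hmem hzmem, Lp.norm_toLp]
      have hfin : μ Set.univ ≠ ⊤ := measure_ne_top μ _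
      have h1 : (μ Set.univ ^ (2 : ℝ≥0∞).toReal⁻¹ * ENNReal.ofReal (ρ + ε)).toReal
          = c * (ρ + ε) := by
        rw [ENNReal.toReal_mul, ← ENNReal.toReal_rpow, ENNReal.toReal_ofReal (by linarith)]
        congr 1
        rw [hc, Real.sqrt_eq_rpow]
        norm_num
      rw [← h1]
      exact ENNReal.toReal_mono
        (by
          refine ENNReal.mul_ne_top ?_ ENNReal.ofReal_ne_top
          exact ENNReal.rpow_ne_top_of_nonneg (by norm_num) hfin)
        hsnorm
    exact le_trans (Metric.infDist_le_dist_of_mem hzD) hdist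
  refine le_of_forall_pos_le_add ?_
  intro δ hδ
  have hεpos : 0 < δ / (c + 1) := div_pos hδ (by linarith)
  refine le_trans (key _ hεpos) ?_
  have : c * (δ / (c + 1)) ≤ δ := by
    rw [mul_div_assoc']
    rw [div_le_iff₀ (by linarith)]
    nlinarith
  nlinarith [key (δ / (c + 1)) hεpos]
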